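/- Let B and C be n×n complex matrices and let S = {X ∈ M_n(ℂ) : XC = BX}. Then the space of solutions W ∈ M_{n²}(ℂ) of the matrix equation W(C ⊗ 1_n) = (B ⊗ 1_n)W, where ⊗ denotes the Kronecker product, is exactly S ⊗ M_n(ℂ), i.e. the linear span of all Kronecker products X ⊗ M with X ∈ S and M ∈ M_n(ℂ). -/

import Mathlib

open Kronecker

/-- Solutions of `W (C ⊗ 1) = (B ⊗ 1) W`.  For `n × n` complex
matrices `B, C`, a matrix `W` satisfies `W (C ⊗ 1) = (B ⊗ 1) W` (Kronecker
products) iff `W` lies in the span of the Kronecker products `X ⊗ M` where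
`X C = B X` and `M` is arbitrary. -/
theorem stmt_8 (n : ℕ) (B C : Matrix (Fin n) (Fin n) ℂ)
    (W : Matrix (Fin n × Fin n) (Fin n × Fin n) ℂ) :
    W * (C ⊗ₖ (1 : Matrix (Fin n) (Fin n) ℂ)) =
      (B ⊗ₖ (1 : Matrix (Fin n) (Fin n) ℂ)) * W ↔
    W ∈ Submodule.span ℂ
      {W' : Matrix (Fin n × Fin n) (Fin n × Fin n) ℂ |
        ∃ X M : Matrix (Fin n) (Fin n) ℂ, X * C = B * X ∧ W' = X ⊗ₖ M} := by
  constructor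
  · intro h
    set X : Fin n → Fin n → Matrix (Fin n) (Fin n) ℂ :=
      fun j l => Matrix.of (fun i k => W (i, j) (k, l)) with hX
    have hXC : ∀ j l, X j l * C = B * X j l := by
      intro j l
      ext i k
      have := congrFun (congrFun h (i, j)) (k, l)
      simp only [Matrix.mul_apply, Matrix.kroneckerMap_apply, Fintype.sum_prod_type,
        Matrix.one_apply, mul_ite, mul_one, mul_zero, ite_mul, one_mul, zero_mul,
        Finset.sum_ite_eq, Finset.sum_ite_eq', Finset.mem_univ, if_true] at this ⊢
      simpa [hX] using this
    have hW : W = ∑ j : Fin n, ∑ l : Fin n,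
        (X j l) ⊗ₖ (Matrix.single j l (1 : ℂ)) := by
      ext ⟨i, j'⟩ ⟨k, l'⟩
      simp [Matrix.sum_apply, Matrix.kroneckerMap_apply, Matrix.single,
        Matrix.of_apply, ite_and, mul_ite, mul_one, mul_zero, Finset.sum_ite_eq',
        hX]
    rw [hW]
    refine Submodule.sum_mem _ fun j _ => Submodule.sum_mem _ fun l _ =>
      Submodule.subset_span ?_
    exact ⟨X j l, Matrix.single j l 1, hXC j l, rfl⟩
  · intro h
    induction h using Submodule.span_induction with
    | mem W' hW' =>
      obtain ⟨Y, M, hYC, rfl⟩ := hW'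
      rw [← Matrix.mul_kronecker_mul, ← Matrix.mul_kronecker_mul, Matrix.mul_one,
        Matrix.one_mul, hYC]
    | zero => simp
    | add x y _ _ hx hy => rw [Matrix.add_mul, Matrix.mul_add, hx, hy]
    | smul c x _ hx => rw [Matrix.smul_mul, Matrix.mul_smul, hx]
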